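/- arXiv:1602.02252 — 2 statements merged into one kernel-verified Lean document; each statement's English description precedes it below -/
import Mathlib

section
/- Let A be a unital associative ℝ-algebra and w ∈ A with (1−w) invertible and w² = λ·1 for a real λ ≠ 1. Then with φ(w) = (1+w)(1−w)⁻¹, one has w·(φ(w) + φ(w)⁻¹ + 2) = φ(w) − φ(w)⁻¹. -/
/-- With φ(w) = (1+w)(1−w)⁻¹ and w² = λ•1, λ ≠ 1, one has
w·(φ(w) + φ(w)⁻¹ + 2) = φ(w) − φ(w)⁻¹. -/
theorem stmt_6 {A : Type*} [Ring A] [Algebra ℝ A] (w : A) (l : ℝ)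
    (hw : w ^ 2 = l • (1 : A)) (hl : l ≠ 1) (hu : IsUnit (1 - w)) :
    w * ((1 + w) * Ring.inverse (1 - w) + Ring.inverse ((1 + w) * Ring.inverse (1 - w)) + 2) =
      (1 + w) * Ring.inverse (1 - w) - Ring.inverse ((1 + w) * Ring.inverse (1 - w)) := by
  set c : ℝ := (1 - l)⁻¹ with hcdef
  have hne : (1 : ℝ) - l ≠ 0 := sub_ne_zero_of_ne (Ne.symm hl)
  have hc : c * (1 - l) = 1 := inv_mul_cancel₀ hne
  have h1 : (1 - w) * (1 + w) = (1 - l) • (1 : A) := by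
    have : (1 - w) * (1 + w) = 1 - w ^ 2 := by noncomm_ring
    rw [this, hw, sub_smul, one_smul]
  have h2 : (1 + w) * (1 - w) = (1 - l) • (1 : A) := by
    have : (1 + w) * (1 - w) = 1 - w ^ 2 := by noncomm_ring
    rw [this, hw, sub_smul, one_smul]
  have key : ∀ x y : A, x * y = (1 - l) • 1 → x * (c • y) = 1 := by
    intro x y hxy
    rw [mul_smul_comm, hxy, smul_smul, hc, one_smul]
  have hinv : Ring.inverse (1 - w) = c • (1 + w) := by
    apply hu.mul_left_cancel
    rw [Ring.mul_inverse_cancel _ hu, key _ _ h1]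
  set p := (1 + w) * Ring.inverse (1 - w) with hpdef
  have hp : p = c • ((1 + w) * (1 + w)) := by
    rw [hpdef, hinv, mul_smul_comm]
  set q : A := c • ((1 - w) * (1 - w)) with hqdef
  have hpq : p * q = 1 := by
    rw [hp, hqdef, smul_mul_smul_comm]
    have : (1 + w) * (1 + w) * ((1 - w) * (1 - w))
        = ((1 + w) * (1 - w)) * ((1 + w) * (1 - w)) := by noncomm_ring
    rw [this, h2, smul_mul_smul_comm, one_mul, smul_smul]
    have : c * c * ((1 - l) * (1 - l)) = (c * (1 - l)) * (c * (1 - l)) := by ring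
    rw [this, hc, one_mul, one_smul]
  have hqp : q * p = 1 := by
    rw [hp, hqdef, smul_mul_smul_comm]
    have : (1 - w) * (1 - w) * ((1 + w) * (1 + w))
        = ((1 - w) * (1 + w)) * ((1 - w) * (1 + w)) := by noncomm_ring
    rw [this, h1, smul_mul_smul_comm, one_mul, smul_smul]
    have : c * c * ((1 - l) * (1 - l)) = (c * (1 - l)) * (c * (1 - l)) := by ring
    rw [this, hc, one_mul, one_smul]
  have hup : IsUnit p := ⟨⟨p, q, hpq, hqp⟩, rfl⟩
  have hinvp : Ring.inverse p = q := by
    apply hup.mul_left_cancel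
    rw [Ring.mul_inverse_cancel _ hup, hpq]
  rw [hinvp, hp, hqdef]
  have hsum : (1 + w) * (1 + w) + (1 - w) * (1 - w) = (2 + 2 * l) • (1 : A) := by
    have : (1 + w) * (1 + w) + (1 - w) * (1 - w) = 2 • (1 : A) + 2 • (w ^ 2) := by
      noncomm_ring
    rw [this, hw, ← Nat.cast_smul_eq_nsmul ℝ 2 (1 : A),
      ← Nat.cast_smul_eq_nsmul ℝ 2 (l • (1 : A)), smul_smul, ← add_smul]
    norm_num
  have hdiff : (1 + w) * (1 + w) - (1 - w) * (1 - w) = (4 : ℝ) • w := by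
    have : (1 + w) * (1 + w) - (1 - w) * (1 - w) = 4 • w := by noncomm_ring
    rw [this, ← Nat.cast_smul_eq_nsmul ℝ 4 w]; norm_num
  rw [← smul_add, ← smul_sub, hsum, hdiff, smul_smul, smul_smul]
  have h2A : (2 : A) = (2 : ℝ) • (1 : A) := by
    rw [Algebra.smul_def, mul_one, map_ofNat]
  rw [h2A, ← add_smul]
  rw [mul_smul_comm, mul_one]
  congr 1
  linear_combination (-2 : ℝ) * hc
end

section
/- Let h > 0 and let D_h and ω, m be as in the discrete Dirac-Kähler setting, with χ_h(x) = Π_j (−1)^{x_j/h} e_{n+j}e_j. If f : (hℤ)^n → Cl(n,n) satisfies Σ_{j=1}^n [e_j (f(x+h e_j) − f(x−h e_j))/(2h) − e_{n+j}(f(x+h e_j) + f(x−h e_j))/(2h)] = −m_h(ω) f(x) for all x, where m_h(ω) = Σ_j (mω_j − 1/h) e_{n+j}, then g(x) = χ_h(x) f(x) satisfies (D_h − mω) g = 0, i.e., D_h g(x) = mω·g(x) for all x. -/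
section aux
variable {A : Type*} [Ring A] {ι : Type*}

lemma list_comm (P : ι → A) (a : A) (k : ι)
    (hcomm : ∀ j, j ≠ k → P j * a = a * P j) :
    ∀ L : List ι, k ∉ L → (L.map P).prod * a = a * (L.map P).prod := by
  intro L
  induction L with
  | nil => simp
  | cons i t ih =>
    intro hk
    simp only [List.mem_cons, not_or] at hk
    simp only [List.map_cons, List.prod_cons]
    rw [mul_assoc, ih hk.2, ← mul_assoc, hcomm i (fun hi => hk.1 hi.symm), mul_assoc]

lemma list_anti (P : ι → A) (a : A) (k : ι)
    (hcomm : ∀ j, j ≠ k → P j * a = a * P j) (hanti : P k * a = -(a * P k)) :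
    ∀ L : List ι, L.Nodup → k ∈ L → (L.map P).prod * a = -(a * (L.map P).prod) := by
  intro L
  induction L with
  | nil => simp
  | cons i t ih =>
    intro hnd hk
    have hnd' := (List.nodup_cons.mp hnd)
    simp only [List.map_cons, List.prod_cons]
    rcases List.mem_cons.mp hk with hik | hkt
    · subst hik
      rw [mul_assoc, list_comm P a k hcomm t hnd'.1, ← mul_assoc, hanti, neg_mul, mul_assoc]
    · have hik : i ≠ k := fun hh => hnd'.1 (hh ▸ hkt)
      rw [mul_assoc, ih hnd'.2 hkt, mul_neg, ← mul_assoc, hcomm i hik, mul_assoc]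

lemma list_negentry_comm (P Q : ι → A) (k : ι)
    (h1 : ∀ j, j ≠ k → Q j = P j) :
    ∀ L : List ι, k ∉ L → (L.map Q).prod = (L.map P).prod := by
  intro L
  induction L with
  | nil => simp
  | cons i t ih =>
    intro hk
    simp only [List.mem_cons, not_or] at hk
    simp only [List.map_cons, List.prod_cons, ih hk.2, h1 i (fun hi => hk.1 hi.symm)]

lemma list_negentry (P Q : ι → A) (k : ι)
    (h1 : ∀ j, j ≠ k → Q j = P j) (h2 : Q k = - P k) :
    ∀ L : List ι, L.Nodup → k ∈ L → (L.map Q).prod = -(L.map P).prod := by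
  intro L
  induction L with
  | nil => simp
  | cons i t ih =>
    intro hnd hk
    have hnd' := (List.nodup_cons.mp hnd)
    simp only [List.map_cons, List.prod_cons]
    rcases List.mem_cons.mp hk with hik | hkt
    · subst hik
      rw [h2, list_negentry_comm P Q k h1 t hnd'.1, neg_mul]
    · have hik : i ≠ k := fun hh => hnd'.1 (hh ▸ hkt)
      rw [ih hnd'.2 hkt, h1 i hik, mul_neg]

end aux

/-- If f satisfies Σ_j [e_j (f(x+e_j)−f(x−e_j))/(2h) − e_{n+j}(f(x+e_j)+f(x−e_j))/(2h)]
= −m_h(ω) f(x) with m_h(ω) = Σ_j (mω_j − 1/h) e_{n+j}, then g(x) = χ_h(x) f(x) is a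
null solution of D_h − mω, i.e. D_h g(x) = mω·g(x) for all x. -/
theorem stmt_19 {n : ℕ} {A : Type*} [Ring A] [Algebra ℝ A]
    (E F : Fin n → A)
    (hEE : ∀ j k, E j * E k + E k * E j = if j = k then (-2 : A) else 0)
    (hEF : ∀ j k, E j * F k + F k * E j = 0)
    (hFF : ∀ j k, F j * F k + F k * F j = if j = k then (2 : A) else 0)
    (h m : ℝ) (hh : 0 < h)
    (ω : Fin n → ℝ) (hω : ∑ j, (ω j) ^ 2 = 1)
    (χ : (Fin n → ℤ) → A)
    (hχ : ∀ x, χ x = (List.ofFn fun j : Fin n => ((-1 : ℝ) ^ (x j)) • (F j * E j)).prod)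
    (f g : (Fin n → ℤ) → A)
    (hf : ∀ x, ∑ j, (E j * ((2 * h)⁻¹ • (f (x + Pi.single j 1) - f (x - Pi.single j 1)))
        - F j * ((2 * h)⁻¹ • (f (x + Pi.single j 1) + f (x - Pi.single j 1)))) =
      -((∑ j, (m * ω j - 1 / h) • F j) * f x))
    (hg : ∀ x, g x = χ x * f x) :
    ∀ x, (∑ j, (E j * ((2 * h)⁻¹ • (g (x + Pi.single j 1) - g (x - Pi.single j 1)))
        + F j * ((2 * h)⁻¹ • (2 • g x - g (x + Pi.single j 1) - g (x - Pi.single j 1))))) =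
      (m • (∑ j, ω j • F j)) * g x := by
  have hne : (h : ℝ) ≠ 0 := ne_of_gt hh
  -- basic anticommutation consequences
  have hEEne : ∀ j k, j ≠ k → E j * E k = -(E k * E j) := fun j k hjk =>
    eq_neg_of_add_eq_zero_left (by simpa [hjk] using hEE j k)
  have hEFr : ∀ j k, E j * F k = -(F k * E j) := fun j k =>
    eq_neg_of_add_eq_zero_left (hEF j k)
  have hFEr : ∀ j k, F k * E j = -(E j * F k) := fun j k =>
    eq_neg_of_add_eq_zero_right (hEF j k)
  have hFFne : ∀ j k, j ≠ k → F j * F k = -(F k * F j) := fun j k hjk =>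
    eq_neg_of_add_eq_zero_left (by simpa [hjk] using hFF j k)
  -- commutation of the χ-factors with generators
  have hcommE : ∀ j k, j ≠ k → (F j * E j) * E k = E k * (F j * E j) := by
    intro j k hjk
    rw [mul_assoc, hEEne j k hjk, mul_neg, ← mul_assoc, hFEr k j, neg_mul, neg_neg, mul_assoc]
  have hantiE : ∀ k, (F k * E k) * E k = -(E k * (F k * E k)) := by
    intro k
    rw [← mul_assoc (E k), hEFr k k, neg_mul, neg_neg]
  have hcommF : ∀ j k, j ≠ k → (F j * E j) * F k = F k * (F j * E j) := by
    intro j k hjk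
    rw [mul_assoc, hEFr j k, mul_neg, ← mul_assoc, hFFne j k hjk, neg_mul, neg_neg, mul_assoc]
  have hantiF : ∀ k, (F k * E k) * F k = -(F k * (F k * E k)) := by
    intro k
    rw [mul_assoc, hEFr k k, mul_neg]
  -- χ anticommutes with each generator
  have hχE : ∀ x k, χ x * E k = -(E k * χ x) := by
    intro x k
    rw [hχ, List.ofFn_eq_map]
    refine list_anti _ _ k (fun j hjk => ?_) ?_ _ (List.nodup_finRange n) (List.mem_finRange k)
    · rw [smul_mul_assoc, mul_smul_comm, hcommE j k hjk]
    · rw [smul_mul_assoc, mul_smul_comm, hantiE k, smul_neg]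
  have hχF : ∀ x k, χ x * F k = -(F k * χ x) := by
    intro x k
    rw [hχ, List.ofFn_eq_map]
    refine list_anti _ _ k (fun j hjk => ?_) ?_ _ (List.nodup_finRange n) (List.mem_finRange k)
    · rw [smul_mul_assoc, mul_smul_comm, hcommF j k hjk]
    · rw [smul_mul_assoc, mul_smul_comm, hantiF k, smul_neg]
  -- χ changes sign under unit shifts
  have hχp : ∀ (x : Fin n → ℤ) (j : Fin n), χ (x + Pi.single j 1) = -χ x := by
    intro x j
    rw [hχ, hχ, List.ofFn_eq_map, List.ofFn_eq_map]
    refine list_negentry _ _ j (fun k hkj => ?_) ?_ _ (List.nodup_finRange n) (List.mem_finRange j)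
    · simp [Pi.single_eq_of_ne hkj]
    · have h1 : ((-1:ℝ)) ^ (x j + 1) = -((-1:ℝ) ^ (x j)) := by
        rw [zpow_add_one₀ (by norm_num : (-1:ℝ) ≠ 0)]; ring
      simp only [Pi.add_apply, Pi.single_eq_same, h1, neg_smul]
  have hχm : ∀ (x : Fin n → ℤ) (j : Fin n), χ (x - Pi.single j 1) = -χ x := by
    intro x j
    rw [hχ, hχ, List.ofFn_eq_map, List.ofFn_eq_map]
    refine list_negentry _ _ j (fun k hkj => ?_) ?_ _ (List.nodup_finRange n) (List.mem_finRange j)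
    · simp [Pi.single_eq_of_ne hkj]
    · have h1 : ((-1:ℝ)) ^ (x j - 1) = -((-1:ℝ) ^ (x j)) := by
        rw [zpow_sub_one₀ (by norm_num : (-1:ℝ) ≠ 0)]; norm_num
      simp only [Pi.sub_apply, Pi.single_eq_same, h1, neg_smul]
  intro x
  have hEc : ∀ (k : Fin n) (y : A), E k * (χ x * y) = -(χ x * (E k * y)) := by
    intro k y
    have hk : E k * χ x = -(χ x * E k) := by rw [hχE x k, neg_neg]
    rw [← mul_assoc, hk, neg_mul, mul_assoc]
  have hFc : ∀ (k : Fin n) (y : A), F k * (χ x * y) = -(χ x * (F k * y)) := by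
    intro k y
    have hk : F k * χ x = -(χ x * F k) := by rw [hχF x k, neg_neg]
    rw [← mul_assoc, hk, neg_mul, mul_assoc]
  have h2h : (h : ℝ)⁻¹ = (2 * h)⁻¹ * 2 := by
    field_simp
  have key : ∀ j : Fin n,
      E j * ((2 * h)⁻¹ • (g (x + Pi.single j 1) - g (x - Pi.single j 1)))
        + F j * ((2 * h)⁻¹ • (2 • g x - g (x + Pi.single j 1) - g (x - Pi.single j 1)))
      = χ x * (E j * ((2 * h)⁻¹ • (f (x + Pi.single j 1) - f (x - Pi.single j 1)))
          - F j * ((2 * h)⁻¹ • (f (x + Pi.single j 1) + f (x - Pi.single j 1))))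
        - h⁻¹ • (χ x * (F j * f x)) := by
    intro j
    rw [hg, hg, hg, hχp x j, hχm x j, h2h]
    simp only [neg_mul, mul_sub, mul_add, smul_sub, smul_add, mul_smul_comm, mul_neg, neg_neg,
      sub_neg_eq_add, hEc, hFc, smul_neg, two_smul]
    module
  rw [Finset.sum_congr rfl (fun j _ => key j), Finset.sum_sub_distrib, ← Finset.mul_sum, hf x,
    hg x]
  have hRHS : (m • (∑ j, ω j • F j)) * (χ x * f x) = -∑ j, (m * ω j) • (χ x * (F j * f x)) := by
    rw [smul_mul_assoc, Finset.sum_mul, Finset.smul_sum, ← Finset.sum_neg_distrib]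
    refine Finset.sum_congr rfl (fun j _ => ?_)
    rw [smul_mul_assoc, hFc j (f x), smul_neg, smul_neg, smul_smul]
  rw [hRHS]
  rw [mul_neg, Finset.sum_mul, Finset.mul_sum]
  simp only [smul_mul_assoc, mul_smul_comm, mul_assoc]
  rw [sub_eq_add_neg, ← Finset.sum_neg_distrib, ← Finset.sum_neg_distrib, ← Finset.sum_add_distrib, ← Finset.sum_neg_distrib]
  refine Finset.sum_congr rfl (fun j _ => ?_)
  rw [← neg_add]
  congr 1
  rw [← add_smul]
  congr 1
  field_simp
  ring
end
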